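/- Let ū minimize J(u) = ½‖S(f+u) − w_d‖² + (ν/2)‖u‖² + η‖u‖_{L¹} over U_ad, with p = S*(S(f+ū) − w_d) the adjoint state (so the variational inequality ⟨−p + νū + λ, v − ū⟩ ≥ 0 holds for all v ∈ U_ad with λ ∈ ∂(η‖·‖_{L¹})(ū)). Suppose u_a(x) < 0 < u_b(x) a.e. Then for a.e. x ∈ I with |p(x)| ≤ η, one has ū(x) = 0. -/

import Mathlib

open MeasureTheory Set

/-- sparsity of the optimal control: if `ubar` minimizes
`J(u) = ½‖S(f+u) − w_d‖² + (ν/2)‖u‖² + η‖u‖_{L¹}` over `U_ad`, with adjoint state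
`p = S*(S(f+ubar) − w_d)` and subgradient `λ ∈ ∂(η‖·‖₁)(ubar)` satisfying the variational
inequality, and `u_a < 0 < u_b` a.e., then `ubar = 0` a.e. on `{|p| ≤ η}`. -/
theorem sparsity_of_optimal_control
    (L : ℝ) (hL : 0 < L)
    (S : Lp ℝ 2 (volume.restrict (Ioo (0:ℝ) L)) →L[ℝ] Lp ℝ 2 (volume.restrict (Ioo (0:ℝ) L)))
    (hS : Function.Injective S)
    (w_d f : Lp ℝ 2 (volume.restrict (Ioo (0:ℝ) L)))
    (ν η : ℝ) (hν : 0 < ν) (hη : 0 < η)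
    (u_a u_b : ℝ → ℝ)
    (hab : ∀ᵐ x ∂(volume.restrict (Ioo (0:ℝ) L)), u_a x < 0 ∧ 0 < u_b x)
    (Uad : Set (Lp ℝ 2 (volume.restrict (Ioo (0:ℝ) L))))
    (hUad : Uad = {u : Lp ℝ 2 (volume.restrict (Ioo (0:ℝ) L)) |
      ∀ᵐ x ∂(volume.restrict (Ioo (0:ℝ) L)), u_a x ≤ u x ∧ u x ≤ u_b x})
    (ubar p lam : Lp ℝ 2 (volume.restrict (Ioo (0:ℝ) L)))
    (hubar : ubar ∈ Uad)
    (hmin : ∀ v ∈ Uad,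
      (1/2) * ‖S (f + ubar) - w_d‖^2 + (ν/2) * ‖ubar‖^2
          + η * ∫ x, |ubar x| ∂(volume.restrict (Ioo (0:ℝ) L)) ≤
        (1/2) * ‖S (f + v) - w_d‖^2 + (ν/2) * ‖v‖^2
          + η * ∫ x, |v x| ∂(volume.restrict (Ioo (0:ℝ) L)))
    (hp : p = ContinuousLinearMap.adjoint S (S (f + ubar) - w_d))
    (hlam : ∀ᵐ x ∂(volume.restrict (Ioo (0:ℝ) L)),
      (ubar x ≠ 0 → lam x = η * Real.sign (ubar x)) ∧ (ubar x = 0 → |lam x| ≤ η))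
    (hVI : ∀ v ∈ Uad, (0:ℝ) ≤ inner ℝ (-p + ν • ubar + lam) (v - ubar)) :
    ∀ᵐ x ∂(volume.restrict (Ioo (0:ℝ) L)), |p x| ≤ η → ubar x = 0 := by
  classical
  set p' : ℝ → ℝ := (Lp.aestronglyMeasurable p).mk p with hp'def
  have hpae : (p : ℝ → ℝ) =ᵐ[(volume.restrict (Ioo (0:ℝ) L))] p' := (Lp.aestronglyMeasurable p).ae_eq_mk
  have hp'meas : Measurable p' := (Lp.aestronglyMeasurable p).stronglyMeasurable_mk.measurable
  set T : Set ℝ := {x | η < |p' x|} with hTdef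
  have hT : MeasurableSet T := measurableSet_lt measurable_const hp'meas.abs
  set g : ℝ → ℝ := T.indicator (fun x => ubar x) with hgdef
  have hgm : AEStronglyMeasurable g (volume.restrict (Ioo (0:ℝ) L)) := (Lp.aestronglyMeasurable ubar).indicator hT
  have hgmem : MemLp g 2 (volume.restrict (Ioo (0:ℝ) L)) :=
    MemLp.of_le (Lp.memLp ubar) hgm
      (Filter.Eventually.of_forall fun x => norm_indicator_le_norm_self _ x)
  set v : Lp ℝ 2 (volume.restrict (Ioo (0:ℝ) L)) := hgmem.toLp g with hvdef
  have hvcoe : (v : ℝ → ℝ) =ᵐ[(volume.restrict (Ioo (0:ℝ) L))] g := hgmem.coeFn_toLp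
  have hub : ∀ᵐ x ∂(volume.restrict (Ioo (0:ℝ) L)), u_a x ≤ ubar x ∧ ubar x ≤ u_b x := by
    rw [hUad] at hubar; exact hubar
  have hvUad : v ∈ Uad := by
    rw [hUad]
    filter_upwards [hvcoe, hub, hab] with x hx hbx habx
    rw [hx, hgdef]
    by_cases hxT : x ∈ T
    · rw [Set.indicator_of_mem hxT]; exact hbx
    · rw [Set.indicator_of_notMem hxT]
      exact ⟨le_of_lt habx.1, le_of_lt habx.2⟩
  have hVIv := hVI v hvUad
  rw [MeasureTheory.L2.inner_def] at hVIv
  set q : Lp ℝ 2 (volume.restrict (Ioo (0:ℝ) L)) := -p + ν • ubar + lam with hqdef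
  set d : Lp ℝ 2 (volume.restrict (Ioo (0:ℝ) L)) := v - ubar with hddef
  have hint : Integrable (fun x => (q : ℝ → ℝ) x * (d : ℝ → ℝ) x) (volume.restrict (Ioo (0:ℝ) L)) := by
    simpa [RCLike.inner_apply, mul_comm] using MeasureTheory.L2.integrable_inner (𝕜 := ℝ) q d
  have hVIv' : (0:ℝ) ≤ ∫ x, (q : ℝ → ℝ) x * (d : ℝ → ℝ) x ∂(volume.restrict (Ioo (0:ℝ) L)) := by
    simpa [RCLike.inner_apply, mul_comm] using hVIv
  have hcoe : ∀ᵐ x ∂(volume.restrict (Ioo (0:ℝ) L)), (q : ℝ → ℝ) x * (d : ℝ → ℝ) x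
      = (-(p x) + ν * ubar x + lam x) * (g x - ubar x) := by
    filter_upwards [Lp.coeFn_add (-p + ν • ubar) lam, Lp.coeFn_add (-p) (ν • ubar),
      Lp.coeFn_neg p, Lp.coeFn_smul ν ubar, Lp.coeFn_sub v ubar, hvcoe] with x h1 h2 h3 h4 h5 h6
    rw [hqdef, hddef]
    simp only [h1, h2, h3, h4, h5, h6, Pi.add_apply, Pi.neg_apply, Pi.smul_apply,
      Pi.sub_apply, smul_eq_mul]
  have key : ∀ᵐ x ∂(volume.restrict (Ioo (0:ℝ) L)), (q : ℝ → ℝ) x * (d : ℝ → ℝ) x ≤ 0 ∧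
      (|p x| ≤ η → ubar x ≠ 0 → (q : ℝ → ℝ) x * (d : ℝ → ℝ) x < 0) := by
    filter_upwards [hcoe, hlam, hpae] with x hx hlx hpx
    rw [hx, hgdef]
    by_cases hxT : x ∈ T
    · rw [Set.indicator_of_mem hxT]
      refine ⟨by simp, fun hple _ => absurd hple ?_⟩
      rw [hTdef] at hxT
      rw [hpx]; exact not_le.mpr hxT
    · rw [Set.indicator_of_notMem hxT]
      have hple : |p x| ≤ η := by rw [hpx]; exact not_lt.mp (by simpa [hTdef] using hxT)
      by_cases hu : (ubar : ℝ → ℝ) x = 0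
      · exact ⟨by simp [hu], fun _ hu' => absurd hu hu'⟩
      · have hl : (lam : ℝ → ℝ) x = η * Real.sign (ubar x) := hlx.1 hu
        have hsgn : (lam : ℝ → ℝ) x * ubar x = η * |ubar x| := by
          rcases lt_or_gt_of_ne hu with hneg | hpos
          · rw [hl, Real.sign_of_neg hneg, abs_of_neg hneg]; ring
          · rw [hl, Real.sign_of_pos hpos, abs_of_pos hpos]; ring
        have hpu : (p : ℝ → ℝ) x * ubar x ≤ η * |ubar x| := by
          calc (p : ℝ → ℝ) x * ubar x ≤ |(p : ℝ → ℝ) x * ubar x| := le_abs_self _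
            _ = |(p : ℝ → ℝ) x| * |ubar x| := abs_mul _ _
            _ ≤ η * |ubar x| := mul_le_mul_of_nonneg_right hple (abs_nonneg _)
        have hcalc : (-(p x) + ν * ubar x + (lam : ℝ → ℝ) x) * (0 - ubar x)
            = (p : ℝ → ℝ) x * ubar x - ν * (ubar x)^2 - (lam : ℝ → ℝ) x * ubar x := by ring
        have hneg : (-(p x) + ν * ubar x + (lam : ℝ → ℝ) x) * (0 - ubar x) < 0 := by
          rw [hcalc, hsgn]
          have h2 : 0 < ν * ((ubar : ℝ → ℝ) x)^2 := mul_pos hν (by positivity)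
          nlinarith
        exact ⟨le_of_lt hneg, fun _ _ => hneg⟩
  have hnonpos : ∀ᵐ x ∂(volume.restrict (Ioo (0:ℝ) L)), (q : ℝ → ℝ) x * (d : ℝ → ℝ) x ≤ 0 :=
    key.mono fun x hx => hx.1
  have hzero : ∫ x, (q : ℝ → ℝ) x * (d : ℝ → ℝ) x ∂(volume.restrict (Ioo (0:ℝ) L)) = 0 :=
    le_antisymm (integral_nonpos_of_ae hnonpos) hVIv'
  have hae0 : (fun x => (q : ℝ → ℝ) x * (d : ℝ → ℝ) x) =ᵐ[(volume.restrict (Ioo (0:ℝ) L))] 0 := by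
    have hge : (0 : ℝ → ℝ) ≤ᵐ[(volume.restrict (Ioo (0:ℝ) L))] fun x => -((q : ℝ → ℝ) x * (d : ℝ → ℝ) x) :=
      hnonpos.mono fun x hx => by simpa using hx
    have hz2 : ∫ x, -((q : ℝ → ℝ) x * (d : ℝ → ℝ) x) ∂(volume.restrict (Ioo (0:ℝ) L)) = 0 := by
      rw [integral_neg, hzero, neg_zero]
    have := (integral_eq_zero_iff_of_nonneg_ae hge hint.neg).mp hz2
    filter_upwards [this] with x hx
    simpa using congrArg Neg.neg hx
  filter_upwards [key, hae0] with x hk h0 hple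
  by_contra hu
  exact absurd h0 (ne_of_lt (hk.2 hple hu))
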